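/- (Dilation of T by a unitary coupling) Let G = E × L, 𝔷 = ℂ^{|G|} with basis {|j,ℓ⟩}, let V = Σ_{i,j,ℓ} |φ(i,(j,ℓ))⟩⟨i,j,ℓ| be the unitary permutation operator on ℂ^N ⊗ 𝔷 associated to a bijection φ of E × G satisfying φ(i,(1,ℓ)) = (β_ℓ(i),(i,ℓ)), and let φ = Σ_ℓ √q_ℓ |1,ℓ⟩ be a unit vector. Then for every operator a on ℂ^N and every density matrix ρ = Σ_{i,i'} ρ_{ii'}|i⟩⟨i'|: tr(V* (a⊗𝟙) V · ρ⊗|φ⟩⟨φ|) = tr(T[a]·ρ), where T[a] = Σ_{ℓ,i} q_ℓ |i⟩⟨β_ℓ(i)| a |β_ℓ(i)⟩⟨i|. -/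

import Mathlib

open ComplexOrder Matrix

/-- The unitary permutation operator `V` associated to the coupling `φ`, together
with the vector `φ_vec = ∑_ℓ √q_ℓ |1,ℓ⟩`, dilates the stochastic map `T`:
`tr(V* (a⊗𝟙) V · ρ ⊗ |φ⟩⟨φ|) = tr(T[a] ρ)` for every density matrix `ρ`. -/
theorem stmt18 (N : ℕ) (L : Type*) [Fintype L] [DecidableEq L]
    (β : L → Fin N → Fin N) (q : L → ℝ)
    (hq0 : ∀ ℓ, 0 ≤ q ℓ) (hq1 : ∑ ℓ, q ℓ = 1) (e1 : Fin N)
    (φ : (Fin N × (Fin N × L)) ≃ (Fin N × (Fin N × L)))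
    (hφ : ∀ (i : Fin N) (ℓ : L), φ (i, (e1, ℓ)) = (β ℓ i, (i, ℓ)))
    (V : Matrix (Fin N × (Fin N × L)) (Fin N × (Fin N × L)) ℂ)
    (hV : V = ∑ s : Fin N × (Fin N × L), Matrix.single (φ s) s 1)
    (φvec : (Fin N × L) → ℂ)
    (hφvec : ∀ g, φvec g = if g.1 = e1 then (Real.sqrt (q g.2) : ℂ) else 0)
    (a ρ : Matrix (Fin N) (Fin N) ℂ)
    (hρ : ρ.PosSemidef) (hρtr : ρ.trace = 1) :
    (Vᴴ *
        (Matrix.of (fun p r : Fin N × (Fin N × L) =>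
          a p.1 r.1 * (if p.2 = r.2 then 1 else 0))) * V *
        (Matrix.of (fun p r : Fin N × (Fin N × L) =>
          ρ p.1 r.1 * (φvec p.2 * star (φvec r.2))))).trace
      = ((∑ ℓ, ∑ i, (q ℓ : ℂ) •
          (Matrix.single i (β ℓ i) 1 * a * Matrix.single (β ℓ i) i 1))
          * ρ).trace := by
  set A : Matrix (Fin N × (Fin N × L)) (Fin N × (Fin N × L)) ℂ :=
    Matrix.of (fun p r : Fin N × (Fin N × L) =>
      a p.1 r.1 * (if p.2 = r.2 then 1 else 0)) with hA
  have hVe : ∀ p r, V p r = if p = φ r then 1 else 0 := by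
    intro p r
    rw [hV]
    simp only [Matrix.sum_apply, Matrix.single, Matrix.of_apply]
    rw [Finset.sum_eq_single r]
    · simp [eq_comm]
    · intro b _ hb; simp [hb, eq_comm]
    · simp
  have hX : ∀ s t, (Vᴴ * A * V) s t = A (φ s) (φ t) := by
    intro s t
    simp only [Matrix.mul_apply, Matrix.conjTranspose_apply, hVe]
    simp [apply_ite star, ite_mul, mul_ite]
  have hL : (Vᴴ * A * V *
        (Matrix.of (fun p r : Fin N × (Fin N × L) =>
          ρ p.1 r.1 * (φvec p.2 * star (φvec r.2))))).trace
      = ∑ s : Fin N × (Fin N × L), ∑ t : Fin N × (Fin N × L),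
          A (φ s) (φ t) * (ρ t.1 s.1 * (φvec t.2 * star (φvec s.2))) := by
    simp only [Matrix.trace, Matrix.diag, Matrix.mul_apply, hX, Matrix.of_apply]
  rw [hL]
  have hM : ∀ (i b : Fin N),
      ((Matrix.single i b (1:ℂ) * a * Matrix.single b i 1) * ρ).trace
        = a b b * ρ i i := by
    intro i b
    simp [Matrix.trace, Matrix.mul_apply, Matrix.single, ite_and, ite_mul, mul_ite,
      zero_mul, mul_zero, Finset.sum_ite_eq, Finset.sum_ite_eq']
  have hR : ((∑ ℓ, ∑ i, (q ℓ : ℂ) •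
          (Matrix.single i (β ℓ i) 1 * a * Matrix.single (β ℓ i) i 1))
          * ρ).trace = ∑ ℓ, ∑ i, (q ℓ : ℂ) * (a (β ℓ i) (β ℓ i) * ρ i i) := by
    simp only [Matrix.sum_mul, Matrix.trace_sum, Matrix.smul_mul, Matrix.trace_smul, hM,
      smul_eq_mul]
  rw [hR]
  simp only [hφvec, apply_ite star, star_zero, Complex.star_def, Complex.conj_ofReal,
    Fintype.sum_prod_type, mul_ite, mul_zero, ite_mul, zero_mul,
    Finset.sum_ite_irrel, Finset.sum_const_zero, Prod.mk.injEq, ite_and,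
    Finset.sum_ite_eq', Finset.sum_ite_eq, Finset.mem_univ, if_true, hφ, hA, Matrix.of_apply]
  rw [Finset.sum_comm]
  refine Finset.sum_congr rfl fun ℓ _ => Finset.sum_congr rfl fun i _ => ?_
  rw [← Complex.ofReal_mul, Real.mul_self_sqrt (hq0 ℓ)]
  ring
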